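/- arXiv:2502.02150 — 2 statements merged into one kernel-verified Lean document; each statement's English description precedes it below -/
import Mathlib

section
/- Let p(z|x_t) be a conditional density, x̂_1 = E_{z~p(z|x_t)}[x_1], and J : ℝ^d → ℝ with e^{-J} twice continuously differentiable. If the Hessian of e^{-J} satisfies ‖∇²e^{-J}(x)‖_op ≤ λ_h for all x, and Σ_{11} is the conditional covariance of x_1 given x_t, then |Z_t(x_t) − e^{-J(x̂_1)}| ≤ (λ_h/2) · tr(Σ_{11}) ≤ (λ_h/2) · ‖Σ_{11}‖_2 · d, where Z_t(x_t) = E_{z~p(z|x_t)}[e^{-J(x_1)}]. -/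
open MeasureTheory

open Set in
lemma taylor2_bound {E : Type*} [NormedAddCommGroup E] [NormedSpace ℝ E]
    {f : E → ℝ} (hf : ContDiff ℝ 2 f) {lh : ℝ}
    (hh : ∀ x, ‖iteratedFDeriv ℝ 2 f x‖ ≤ lh) (m x : E) :
    |f x - f m - fderiv ℝ f m (x - m)| ≤ lh / 2 * ‖x - m‖ ^ 2 := by
  set v := x - m with hv
  set g : ℝ → ℝ := fun t => f (m + t • v) with hgdef
  have hA : ∀ t : ℝ, HasDerivAt (fun t : ℝ => m + t • v) v t := by
    intro t
    simpa using ((hasDerivAt_id t).smul_const v).const_add m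
  have hg : ContDiff ℝ 2 g :=
    hf.comp (contDiff_const.add (contDiff_id.smul contDiff_const))
  have hg' : ∀ t : ℝ, HasDerivAt g (fderiv ℝ f (m + t • v) v) t := by
    intro t
    exact ((hf.differentiable (by norm_num) _).hasFDerivAt).comp_hasDerivAt t (hA t)
  have hderivg : deriv g = fun t => fderiv ℝ f (m + t • v) v := by
    funext t; exact (hg' t).deriv
  have hF : ContDiff ℝ 1 (fderiv ℝ f) := (contDiff_succ_iff_fderiv.mp hf).2.2
  have hg'' : ∀ t : ℝ, HasDerivAt (deriv g) (fderiv ℝ (fderiv ℝ f) (m + t • v) v v) t := by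
    intro t
    rw [hderivg]
    have h1 : HasDerivAt (fun t : ℝ => fderiv ℝ f (m + t • v))
        (fderiv ℝ (fderiv ℝ f) (m + t • v) v) t :=
      ((hF.differentiable one_ne_zero _).hasFDerivAt).comp_hasDerivAt t (hA t)
    simpa using h1.clm_apply (hasDerivAt_const t v)
  have hd2 : ∀ t : ℝ, iteratedDeriv 2 g t = iteratedFDeriv ℝ 2 f (m + t • v) ![v, v] := by
    intro t
    rw [iteratedFDeriv_two_apply]
    have : iteratedDeriv 2 g t = deriv (deriv g) t := by
      rw [show (2:ℕ) = 1 + 1 from rfl, iteratedDeriv_succ, iteratedDeriv_one]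
    rw [this, (hg'' t).deriv]
    simp
  have hd2bound : ∀ t : ℝ, |iteratedDeriv 2 g t| ≤ lh * ‖v‖ ^ 2 := by
    intro t
    rw [hd2 t, ← Real.norm_eq_abs]
    calc ‖iteratedFDeriv ℝ 2 f (m + t • v) ![v, v]‖
        ≤ ‖iteratedFDeriv ℝ 2 f (m + t • v)‖ * ∏ i, ‖(![v, v]) i‖ :=
          (iteratedFDeriv ℝ 2 f (m + t • v)).le_opNorm _
      _ ≤ lh * ‖v‖ ^ 2 := by
          rw [Fin.prod_univ_two]
          have h0 : (0:ℝ) ≤ ‖v‖ * ‖v‖ := mul_nonneg (norm_nonneg _) (norm_nonneg _)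
          calc ‖iteratedFDeriv ℝ 2 f (m + t • v)‖ * (‖(![v, v]) 0‖ * ‖(![v, v]) 1‖)
              = ‖iteratedFDeriv ℝ 2 f (m + t • v)‖ * (‖v‖ * ‖v‖) := by norm_num
            _ ≤ lh * (‖v‖ * ‖v‖) := mul_le_mul_of_nonneg_right (hh _) h0
            _ = lh * ‖v‖ ^ 2 := by ring
  -- the "within" derivatives equal global ones on the interior
  have key : ∀ (n : ℕ), ∀ x' ∈ Ioo (0:ℝ) 1,
      iteratedDerivWithin n g (Icc 0 1) x' = iteratedDeriv n g x' := by
    intro n x' hx'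
    rw [iteratedDerivWithin_eq_iteratedFDerivWithin, iteratedDeriv_eq_iteratedFDeriv]
    congr 1
    have h1 : iteratedFDerivWithin ℝ n g (Icc 0 1 ∩ Ioo 0 1) x'
        = iteratedFDerivWithin ℝ n g (Icc 0 1) x' :=
      iteratedFDerivWithin_inter_open isOpen_Ioo hx'
    have h2 : iteratedFDerivWithin ℝ n g (univ ∩ Ioo 0 1) x'
        = iteratedFDerivWithin ℝ n g univ x' :=
      iteratedFDerivWithin_inter_open isOpen_Ioo hx'
    rw [inter_eq_right.mpr Ioo_subset_Icc_self] at h1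
    rw [univ_inter] at h2
    rw [← h1, h2, iteratedFDerivWithin_univ]
  have hud : UniqueDiffWithinAt ℝ (Icc (0:ℝ) 1) 0 :=
    uniqueDiffOn_Icc one_pos 0 ⟨le_refl 0, zero_le_one⟩
  have hfc : ContDiffOn ℝ 1 g (Icc 0 1) := (hg.of_le one_le_two).contDiffOn
  have hdiff : DifferentiableOn ℝ (iteratedDerivWithin 1 g (Icc 0 1)) (Ioo 0 1) := by
    apply DifferentiableOn.congr (f := deriv g)
    · exact (((contDiff_succ_iff_deriv (n := 1)).mp hg).2.2.differentiable one_ne_zero).differentiableOn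
    · intro y hy
      rw [key 1 y hy, iteratedDeriv_one]
  obtain ⟨x', hx', hTaylor⟩ := taylor_mean_remainder_lagrange (n := 1) (x₀ := 0) (x := 1) zero_ne_one
    (by rw [uIcc_of_le zero_le_one]; exact_mod_cast hfc)
    (by rw [uIcc_of_le zero_le_one, uIoo_of_le zero_le_one]; exact hdiff)
  rw [uIoo_of_le zero_le_one] at hx'
  rw [uIcc_of_le zero_le_one] at hTaylor
  have hT1 : taylorWithinEval g 1 (Icc 0 1) 0 1 = g 0 + fderiv ℝ f m v := by
    rw [taylorWithinEval_succ, taylor_within_zero_eval, iteratedDerivWithin_one]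
    have : derivWithin g (Icc 0 1) 0 = deriv g 0 :=
      (hg' 0).differentiableAt.derivWithin hud
    rw [this, (hg' 0).deriv]
    norm_num
  rw [hT1, key 2 x' hx'] at hTaylor
  have hg1 : g 1 = f x := by simp [hgdef, hv]
  have hg0 : g 0 = f m := by simp [hgdef]
  have : f x - f m - fderiv ℝ f m v = iteratedDeriv 2 g x' / 2 := by
    rw [hg1, hg0] at hTaylor
    rw [sub_sub, hTaylor]
    norm_num [Nat.factorial]
  rw [this, abs_div]
  rw [abs_of_nonneg (by norm_num : (0:ℝ) ≤ 2)]
  calc |iteratedDeriv 2 g x'| / 2 ≤ lh * ‖v‖ ^ 2 / 2 := by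
        gcongr
        exact hd2bound x'
    _ = lh / 2 * ‖v‖ ^ 2 := by ring

/-- Error bound of the localized approximation of the normalizer: if the Hessian of
`e^{-J}` is bounded in operator norm by `lh` and `Σ₁₁` is the conditional covariance of
`x₁` given `x_t`, then `|Z_t(x_t) − e^{-J(x̂₁)}| ≤ (lh/2)·tr Σ₁₁ ≤ (lh/2)·‖Σ₁₁‖₂·d`. -/
theorem localized_normalizer_error_bound {Ω : Type*} [MeasurableSpace Ω]
    (μ : Measure Ω) [IsProbabilityMeasure μ]    -- the conditional law p(z|x_t)
    {d : ℕ}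
    (x1 : Ω → EuclideanSpace ℝ (Fin d))         -- ω ↦ x₁ component of z
    (hx1 : Integrable x1 μ)
    (hx2 : Integrable (fun ω => ‖x1 ω‖ ^ 2) μ)  -- finite second moment
    (J : EuclideanSpace ℝ (Fin d) → ℝ) (lh : ℝ)
    (hf : ContDiff ℝ 2 (fun x => Real.exp (-(J x))))
    (hhess : ∀ x, ‖iteratedFDeriv ℝ 2 (fun x => Real.exp (-(J x))) x‖ ≤ lh)
    (m : EuclideanSpace ℝ (Fin d)) (hm : m = ∫ ω, x1 ω ∂μ)  -- x̂₁
    (Cov : Matrix (Fin d) (Fin d) ℝ)            -- Σ₁₁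
    (hCov : ∀ i j, Cov i j = ∫ ω, (x1 ω i - m i) * (x1 ω j - m j) ∂μ)
    (s : ℝ)  -- the largest eigenvalue (L² norm) of Σ₁₁: bounds the quadratic form
    (hs : ∀ u : EuclideanSpace ℝ (Fin d), (∑ i, ∑ j, u i * Cov i j * u j) ≤ s * ‖u‖ ^ 2)
    (Zt : ℝ) (hZt : Zt = ∫ ω, Real.exp (-(J (x1 ω))) ∂μ)
    (hZint : Integrable (fun ω => Real.exp (-(J (x1 ω)))) μ) :
    |Zt - Real.exp (-(J m))| ≤ (lh / 2) * Matrix.trace Cov ∧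
    (lh / 2) * Matrix.trace Cov ≤ (lh / 2) * s * d := by
  have hlh : 0 ≤ lh := le_trans (norm_nonneg _) (hhess 0)
  set f : EuclideanSpace ℝ (Fin d) → ℝ := fun x => Real.exp (-(J x)) with hfdef
  set L := fderiv ℝ f m with hL
  -- integrability facts
  have hxm : Integrable (fun ω => x1 ω - m) μ := hx1.sub (integrable_const m)
  have hsqAESM : AEStronglyMeasurable (fun ω => ‖x1 ω - m‖ ^ 2) μ := by
    have h1 : AEStronglyMeasurable (fun ω => ‖x1 ω - m‖) μ := hxm.aestronglyMeasurable.norm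
    simpa [pow_two, Pi.mul_def] using h1.mul h1
  have hI1 : Integrable (fun ω => ‖x1 ω - m‖ ^ 2) μ := by
    refine Integrable.mono' ((hx2.const_mul 2).add (integrable_const (2 * ‖m‖ ^ 2))) hsqAESM ?_
    filter_upwards with ω
    have h1 : ‖x1 ω - m‖ ≤ ‖x1 ω‖ + ‖m‖ := norm_sub_le _ _
    rw [Real.norm_eq_abs, abs_of_nonneg (by positivity)]
    show ‖x1 ω - m‖ ^ 2 ≤ 2 * ‖x1 ω‖ ^ 2 + 2 * ‖m‖ ^ 2
    have h2 : ‖x1 ω - m‖ ^ 2 ≤ (‖x1 ω‖ + ‖m‖) ^ 2 := pow_le_pow_left₀ (norm_nonneg _) h1 2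
    nlinarith [h2, sq_nonneg (‖x1 ω‖ - ‖m‖)]
  have hIL : Integrable (fun ω => L (x1 ω - m)) μ := L.integrable_comp hxm
  have hZint' : Integrable (fun ω => f (x1 ω)) μ := hZint
  have hZt' : Zt = ∫ ω, f (x1 ω) ∂μ := hZt
  -- mean of x1 - m is zero
  have hmean : (∫ ω, (x1 ω - m) ∂μ) = 0 := by
    rw [integral_sub hx1 (integrable_const m), ← hm]
    simp
  have hintL : (∫ ω, L (x1 ω - m) ∂μ) = 0 := by
    rw [L.integral_comp_comm hxm, hmean, map_zero]
  -- pointwise Taylor bound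
  have hpt : ∀ ω, |f (x1 ω) - f m - L (x1 ω - m)| ≤ lh / 2 * ‖x1 ω - m‖ ^ 2 := fun ω =>
    taylor2_bound hf hhess m (x1 ω)
  -- the error as an integral
  have hIh : Integrable (fun ω => f (x1 ω) - f m - L (x1 ω - m)) μ :=
    (hZint'.sub (integrable_const (f m))).sub hIL
  have herr : Zt - f m = ∫ ω, (f (x1 ω) - f m - L (x1 ω - m)) ∂μ := by
    have e1 : ∫ ω, (f (x1 ω) - f m - L (x1 ω - m)) ∂μ
        = (∫ ω, (f (x1 ω) - f m) ∂μ) - ∫ ω, L (x1 ω - m) ∂μ :=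
      integral_sub (hZint'.sub (integrable_const (f m))) hIL
    have e2 : ∫ ω, (f (x1 ω) - f m) ∂μ = (∫ ω, f (x1 ω) ∂μ) - ∫ _ω, f m ∂μ :=
      integral_sub hZint' (integrable_const (f m))
    rw [e1, e2, hintL, hZt']
    simp
  -- trace = ∫ ‖x1 - m‖²
  have hnormsq : ∀ ω, ‖x1 ω - m‖ ^ 2 = ∑ i, (x1 ω i - m i) ^ 2 := by
    intro ω
    rw [EuclideanSpace.norm_eq]
    rw [Real.sq_sqrt (by positivity)]
    simp [Real.norm_eq_abs, sq_abs]
  have hIi : ∀ i, Integrable (fun ω => (x1 ω i - m i) ^ 2) μ := by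
    intro i
    have hA : AEStronglyMeasurable (fun ω => x1 ω i - m i) μ :=
      ((EuclideanSpace.proj i (𝕜 := ℝ)).continuous.comp_aestronglyMeasurable
        hx1.aestronglyMeasurable).sub aestronglyMeasurable_const
    refine Integrable.mono' hI1 (by simpa [pow_two, Pi.mul_def] using hA.mul hA) ?_
    filter_upwards with ω
    rw [hnormsq ω, Real.norm_eq_abs, abs_of_nonneg (by positivity)]
    exact Finset.single_le_sum (f := fun j => (x1 ω j - m j) ^ 2)
      (fun j _ => by positivity) (Finset.mem_univ i)
  have htrace : Matrix.trace Cov = ∫ ω, ‖x1 ω - m‖ ^ 2 ∂μ := by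
    rw [Matrix.trace]
    have : ∀ i ∈ Finset.univ, Matrix.diag Cov i = ∫ ω, (x1 ω i - m i) ^ 2 ∂μ := by
      intro i _
      rw [Matrix.diag, hCov i i]
      congr 1; funext ω; ring
    rw [Finset.sum_congr rfl this, ← integral_finset_sum _ (fun i _ => hIi i)]
    congr 1; funext ω
    rw [hnormsq ω]
  constructor
  · rw [herr, htrace]
    calc |∫ ω, (f (x1 ω) - f m - L (x1 ω - m)) ∂μ|
        ≤ ∫ ω, |f (x1 ω) - f m - L (x1 ω - m)| ∂μ := by
          simpa [Real.norm_eq_abs] using norm_integral_le_integral_norm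
            (fun ω => f (x1 ω) - f m - L (x1 ω - m)) (μ := μ)
      _ ≤ ∫ ω, lh / 2 * ‖x1 ω - m‖ ^ 2 ∂μ :=
          integral_mono hIh.abs (hI1.const_mul _) (fun ω => hpt ω)
      _ = lh / 2 * ∫ ω, ‖x1 ω - m‖ ^ 2 ∂μ := integral_const_mul _ _
  · have hdiag : ∀ i, Cov i i ≤ s := by
      intro i
      have h := hs (EuclideanSpace.single i 1)
      rw [EuclideanSpace.norm_single] at h
      simp only [norm_one, one_pow, mul_one] at h
      refine le_trans (le_of_eq ?_) h
      rw [Finset.sum_eq_single i, Finset.sum_eq_single i]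
      · simp
      · intro b _ hb; simp [EuclideanSpace.single_apply, hb]
      · simp
      · intro b _ hb
        apply Finset.sum_eq_zero
        intro c _
        simp [EuclideanSpace.single_apply, hb]
      · simp
    have htr : Matrix.trace Cov ≤ s * d := by
      rw [Matrix.trace]
      calc ∑ i, Matrix.diag Cov i ≤ ∑ _i : Fin d, s := Finset.sum_le_sum (fun i _ => hdiag i)
        _ = s * d := by simp [mul_comm]
    calc lh / 2 * Matrix.trace Cov ≤ lh / 2 * (s * d) :=
          mul_le_mul_of_nonneg_left htr (by positivity)
      _ = lh / 2 * s * d := by ring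
end

section
/- Under the deterministic affine path x_t = α_t x_1 + β_t x_0 with β_t ≠ 0, the first-order localized guidance g_t^{local}(x_t) = −E_{z~p(z|x_t)}[(x_1 − x̂_1)(α̇_t x_1 + β̇_t x_0)^T] ∇J(x̂_1) equals g_t^{cov}(x_t) = −((α̇_t β_t − β̇_t α_t)/β_t) Σ_{1|t} ∇J(x̂_1), where Σ_{1|t} = E[(x_1−x̂_1)(x_1−x̂_1)^T | x_t]. -/
open MeasureTheory

/-- Under the deterministic affine path `x_t = α_t x₁ + β_t x₀` with `β_t ≠ 0`, the
first-order localized guidance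
`g^local = −E[(x₁−x̂₁)(α̇_t x₁ + β̇_t x₀)ᵀ] ∇J(x̂₁)` equals
`g^cov = −((α̇_t β_t − β̇_t α_t)/β_t) Σ_{1|t} ∇J(x̂₁)`. -/
theorem g_local_eq_g_cov {Ω : Type*} [MeasurableSpace Ω]
    (μ : Measure Ω) [IsProbabilityMeasure μ]    -- the conditional law given x_t
    {d : ℕ}
    (α β α' β' : ℝ) (hβ : β ≠ 0)
    (x0 x1 : Ω → EuclideanSpace ℝ (Fin d))
    (h0 : Integrable x0 μ) (h1 : Integrable x1 μ)
    (h2 : Integrable (fun ω => ‖x1 ω‖ ^ 2) μ)   -- finite conditional second moments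
    (xt : EuclideanSpace ℝ (Fin d))
    (hpath : ∀ ω, xt = α • x1 ω + β • x0 ω)      -- deterministic interpolation
    (m : EuclideanSpace ℝ (Fin d)) (hm : m = ∫ ω, x1 ω ∂μ)  -- x̂₁
    (J : EuclideanSpace ℝ (Fin d) → ℝ)
    (gl gc : EuclideanSpace ℝ (Fin d))
    -- g^local: the matrix E[(x₁−x̂₁) vᵀ] applied to ∇J(x̂₁)
    (hgl : gl = -∫ ω,
        (inner ℝ (α' • x1 ω + β' • x0 ω) (gradient J m) : ℝ) • (x1 ω - m) ∂μ)
    -- g^cov: the covariance Σ_{1|t} applied to ∇J(x̂₁), with the schedule factor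
    (hgc : gc = -((α' * β - β' * α) / β) •
        ∫ ω, (inner ℝ (x1 ω - m) (gradient J m) : ℝ) • (x1 ω - m) ∂μ) :
    gl = gc := by
  set g := gradient J m with hg
  set c : ℝ := (α' * β - β' * α) / β with hc
  set k : ℝ := (β' / β) * inner ℝ xt g with hk
  -- x0 in terms of x1 and xt
  have hx0 : ∀ ω, x0 ω = β⁻¹ • (xt - α • x1 ω) := by
    intro ω
    have := hpath ω
    rw [this]
    rw [add_sub_cancel_left, smul_smul, inv_mul_cancel₀ hβ, one_smul]
  -- pointwise rewrite of the integrand of gl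
  have hpt : ∀ ω, (inner ℝ (α' • x1 ω + β' • x0 ω) g : ℝ)
      = c * inner ℝ (x1 ω) g + k := by
    intro ω
    rw [hx0 ω]
    simp only [inner_add_left, inner_sub_left, real_inner_smul_left]
    field_simp [hk, hc]
    rw [hc, hk, div_eq_mul_inv, div_eq_mul_inv]
    have hb : β * β⁻¹ = 1 := mul_inv_cancel₀ hβ
    linear_combination (-(inner ℝ (x1 ω) g * (α' * β - β' * α) + β' * inner ℝ xt g)) * hb
  -- integrability facts
  have hsm : AEStronglyMeasurable (fun ω => (inner ℝ (x1 ω) g : ℝ) • (x1 ω - m)) μ := by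
    refine AEStronglyMeasurable.smul (f := fun ω => (inner ℝ (x1 ω) g : ℝ)) (g := fun ω => x1 ω - m) ?_ ?_
    · exact (h1.aestronglyMeasurable.inner aestronglyMeasurable_const)
    · exact h1.aestronglyMeasurable.sub aestronglyMeasurable_const
  have hI1 : Integrable (fun ω => (inner ℝ (x1 ω) g : ℝ) • (x1 ω - m)) μ := by
    refine Integrable.mono' (g := fun ω => ‖g‖ * ‖x1 ω‖ ^ 2 + ‖g‖ * ‖m‖ * ‖x1 ω‖) ?_ hsm ?_
    · exact (h2.const_mul ‖g‖).add (h1.norm.const_mul (‖g‖ * ‖m‖))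
    · filter_upwards with ω
      rw [norm_smul]
      calc ‖(inner ℝ (x1 ω) g : ℝ)‖ * ‖x1 ω - m‖
          ≤ (‖x1 ω‖ * ‖g‖) * (‖x1 ω‖ + ‖m‖) := by
            gcongr
            · exact norm_inner_le_norm _ _
            · exact norm_sub_le _ _
        _ = ‖g‖ * ‖x1 ω‖ ^ 2 + ‖g‖ * ‖m‖ * ‖x1 ω‖ := by ring
  have hv : Integrable (fun ω => x1 ω - m) μ := h1.sub (integrable_const m)
  have hvz : ∫ ω, (x1 ω - m) ∂μ = 0 := by
    rw [integral_sub h1 (integrable_const m), integral_const, probReal_univ,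
      one_smul, ← hm, sub_self]
  -- compute gl
  have hgl' : gl = -(c • ∫ ω, (inner ℝ (x1 ω) g : ℝ) • (x1 ω - m) ∂μ) := by
    rw [hgl]
    congr 1
    have : (fun ω => (inner ℝ (α' • x1 ω + β' • x0 ω) g : ℝ) • (x1 ω - m))
        = fun ω => c • ((inner ℝ (x1 ω) g : ℝ) • (x1 ω - m)) + k • (x1 ω - m) := by
      funext ω
      rw [hpt ω, add_smul, smul_smul]
    have hI1' : Integrable (fun ω => c • ((inner ℝ (x1 ω) g : ℝ) • (x1 ω - m))) μ :=
      hI1.smul c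
    have hv' : Integrable (fun ω => k • (x1 ω - m)) μ := hv.smul k
    rw [this, integral_add hI1' hv', integral_smul, integral_smul,
      hvz, smul_zero, add_zero]
  -- compute gc
  have hgc' : gc = -(c • ∫ ω, (inner ℝ (x1 ω) g : ℝ) • (x1 ω - m) ∂μ) := by
    rw [hgc]
    congr 2
    have : (fun ω => (inner ℝ (x1 ω - m) g : ℝ) • (x1 ω - m))
        = fun ω => (inner ℝ (x1 ω) g : ℝ) • (x1 ω - m) + (-(inner ℝ m g : ℝ)) • (x1 ω - m) := by
      funext ω
      rw [inner_sub_left, sub_smul, neg_smul, sub_eq_add_neg]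
    have hv' : Integrable (fun ω => (-(inner ℝ m g : ℝ)) • (x1 ω - m)) μ :=
      hv.smul (-(inner ℝ m g : ℝ))
    rw [this, integral_add hI1 hv', integral_smul, hvz, smul_zero, add_zero, neg_smul]
  rw [hgl', hgc']
end
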